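/- Let κ ∈ (0,4) and define u : [0,1) × B̄(0,1) → ℝ³ by u(t,x) = x / √(κ(1-t) + |x|²). Then for each t ∈ [0,1), u(t,·) is real analytic on B̄(0,1), u is bounded by 1 on [0,1) × B̄(0,1), but the limit function x ↦ x/|x| has no continuous extension to x = 0. -/

import Mathlib

open Metric

lemma js_analyticAt_sqrt {y : ℝ} (hy : 0 < y) : AnalyticAt ℝ Real.sqrt y := by
  have h1 : AnalyticAt ℂ (fun z : ℂ => z ^ ((2:ℂ))⁻¹) (y : ℂ) :=
    (analyticAt_id).cpow analyticAt_const (by simpa using Complex.ofReal_mem_slitPlane.2 hy)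
  have h2 : AnalyticAt ℝ (fun t : ℝ => (((t:ℂ)) ^ ((2:ℂ))⁻¹).re) y :=
    (Complex.reCLM.analyticAt _).comp
      ((h1.restrictScalars).comp (Complex.ofRealCLM.analyticAt _))
  apply h2.congr
  filter_upwards [eventually_gt_nhds hy] with t ht
  rw [show ((2:ℂ))⁻¹ = ((2⁻¹:ℝ):ℂ) by norm_num, ← Complex.ofReal_cpow ht.le]
  simp [Real.rpow_natCast, Real.sqrt_eq_rpow, one_div]

lemma js_norm_sq (x : EuclideanSpace ℝ (Fin 3)) : ‖x‖ ^ 2 = ∑ i, x i ^ 2 := by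
  rw [EuclideanSpace.norm_eq, Real.sq_sqrt (by positivity)]
  simp [Real.norm_eq_abs, sq_abs]

/-- The John–Stará example: u(t,x) = x/√(κ(1-t)+|x|²) is, for each t ∈ [0,1),
real analytic on the closed unit ball of ℝ³ and bounded by 1, but the limit
function x ↦ x/|x| admits no continuous extension to x = 0. -/
theorem john_stara_example (κ : ℝ) (hκ : κ ∈ Set.Ioo (0 : ℝ) 4)
    (u : ℝ → EuclideanSpace ℝ (Fin 3) → EuclideanSpace ℝ (Fin 3))
    (hu : ∀ t x, u t x = (Real.sqrt (κ * (1 - t) + ‖x‖ ^ 2))⁻¹ • x) :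
    (∀ t ∈ Set.Ico (0 : ℝ) 1, AnalyticOn ℝ (u t) (closedBall 0 1)) ∧
    (∀ t ∈ Set.Ico (0 : ℝ) 1, ∀ x ∈ closedBall (0 : EuclideanSpace ℝ (Fin 3)) 1,
      ‖u t x‖ ≤ 1) ∧
    ¬ ∃ g : EuclideanSpace ℝ (Fin 3) → EuclideanSpace ℝ (Fin 3),
        ContinuousOn g (closedBall 0 1) ∧
        ∀ x ∈ closedBall (0 : EuclideanSpace ℝ (Fin 3)) 1, x ≠ 0 →
          g x = ‖x‖⁻¹ • x := by
  refine ⟨?_, ?_, ?_⟩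
  · intro t ht
    have hc : 0 < κ * (1 - t) := mul_pos hκ.1 (by linarith [ht.2])
    have key : AnalyticOnNhd ℝ (u t) Set.univ := by
      intro x₀ _
      have hpos : 0 < κ * (1 - t) + ‖x₀‖ ^ 2 := by positivity
      have h1 : AnalyticAt ℝ (fun x : EuclideanSpace ℝ (Fin 3) =>
          κ * (1 - t) + ∑ i, x i ^ 2) x₀ := by
        refine analyticAt_const.add (Finset.analyticAt_fun_sum _ fun i _ => ?_)
        exact ((EuclideanSpace.proj i :
          EuclideanSpace ℝ (Fin 3) →L[ℝ] ℝ).analyticAt x₀).pow 2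
      have h2 : AnalyticAt ℝ (fun x : EuclideanSpace ℝ (Fin 3) =>
          (Real.sqrt (κ * (1 - t) + ∑ i, x i ^ 2))⁻¹ • x) x₀ := by
        refine AnalyticAt.fun_smul (AnalyticAt.inv ?_ ?_) analyticAt_id
        · exact (js_analyticAt_sqrt (by rw [← js_norm_sq]; positivity)).comp h1
        · rw [← js_norm_sq]; positivity
      refine h2.congr (Filter.Eventually.of_forall fun x => ?_)
      rw [hu, js_norm_sq]
    exact (key.analyticOn).mono (Set.subset_univ _)
  · intro t ht x _
    have hc : 0 < κ * (1 - t) := mul_pos hκ.1 (by linarith [ht.2])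
    rw [hu, norm_smul, norm_inv, Real.norm_eq_abs,
      abs_of_nonneg (Real.sqrt_nonneg _)]
    rcases eq_or_ne x 0 with rfl | hx
    · simp
    · have hxp : 0 < ‖x‖ := norm_pos_iff.2 hx
      have h1 : ‖x‖ ≤ Real.sqrt (κ * (1 - t) + ‖x‖ ^ 2) := by
        have h := Real.sqrt_le_sqrt (show ‖x‖ ^ 2 ≤ κ * (1 - t) + ‖x‖ ^ 2 by nlinarith)
        rwa [Real.sqrt_sq hxp.le] at h
      have h2 : 0 < Real.sqrt (κ * (1 - t) + ‖x‖ ^ 2) :=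
        Real.sqrt_pos.2 (by positivity)
      rw [inv_mul_le_iff₀ h2]
      linarith
  · rintro ⟨g, hgc, hg⟩
    set e : EuclideanSpace ℝ (Fin 3) := EuclideanSpace.single 0 1 with he
    have hne : ‖e‖ = 1 := by simp [he]
    have he0 : e ≠ 0 := fun h => by simp [h] at hne
    have h0 : (0 : EuclideanSpace ℝ (Fin 3)) ∈ closedBall (0 : EuclideanSpace ℝ (Fin 3)) 1 := by
      simp
    have hcont := (hgc 0 h0).tendsto
    have seq : ∀ (c : ℝ), c = 1 ∨ c = -1 →
        Filter.Tendsto (fun n : ℕ => g (((n:ℝ)+2)⁻¹ • (c • e))) Filter.atTop (nhds (g 0)) := by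
      intro c hc
      apply hcont.comp
      apply tendsto_nhdsWithin_of_tendsto_nhds_of_eventually_within
      · have : Filter.Tendsto (fun n : ℕ => ((n:ℝ)+2)⁻¹) Filter.atTop (nhds 0) := by
          apply tendsto_inv_atTop_zero.comp
          exact Filter.tendsto_atTop_add_const_right _ 2 tendsto_natCast_atTop_atTop
        simpa using this.smul_const (c • e)
      · refine Filter.Eventually.of_forall fun n => ?_
        have hn2 : (0:ℝ) < (n:ℝ) + 2 := by positivity
        simp only [mem_closedBall, dist_zero_right, norm_smul, hne, norm_inv,
          Real.norm_eq_abs, abs_of_pos hn2]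
        rcases hc with rfl | rfl <;> simp <;>
          rw [inv_le_one_iff₀] <;> right <;> linarith
    have hval : ∀ (c : ℝ), c = 1 ∨ c = -1 → ∀ n : ℕ,
        g (((n:ℝ)+2)⁻¹ • (c • e)) = c • e := by
      intro c hc n
      have hn2 : (0:ℝ) < (n:ℝ) + 2 := by positivity
      have hcn : c ≠ 0 := by rcases hc with rfl | rfl <;> norm_num
      have hx0 : (((n:ℝ)+2)⁻¹ • (c • e)) ≠ 0 :=
        smul_ne_zero (inv_ne_zero hn2.ne') (smul_ne_zero hcn he0)
      have hmem : (((n:ℝ)+2)⁻¹ • (c • e)) ∈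
          closedBall (0 : EuclideanSpace ℝ (Fin 3)) 1 := by
        simp only [mem_closedBall, dist_zero_right, norm_smul, hne, norm_inv,
          Real.norm_eq_abs, abs_of_pos hn2]
        rcases hc with rfl | rfl <;> simp <;>
          rw [inv_le_one_iff₀] <;> right <;> linarith
      have habs : |c| = 1 := by rcases hc with rfl | rfl <;> norm_num
      have hnorm : ‖((n:ℝ)+2)⁻¹ • (c • e)‖ = ((n:ℝ)+2)⁻¹ := by
        rw [norm_smul, norm_smul, hne]
        simp [Real.norm_eq_abs, habs, abs_of_pos hn2]
      rw [hg _ hmem hx0, hnorm, inv_inv, smul_smul, mul_inv_cancel₀ hn2.ne', one_smul]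
    have l1 : Filter.Tendsto (fun _ : ℕ => (1:ℝ) • e) Filter.atTop (nhds (g 0)) := by
      have := seq 1 (Or.inl rfl)
      refine this.congr fun n => (hval 1 (Or.inl rfl) n)
    have l2 : Filter.Tendsto (fun _ : ℕ => (-1:ℝ) • e) Filter.atTop (nhds (g 0)) := by
      have := seq (-1) (Or.inr rfl)
      refine this.congr fun n => (hval (-1) (Or.inr rfl) n)
    have e1 : (1:ℝ) • e = g 0 := tendsto_const_nhds_iff.mp l1
    have e2 : (-1:ℝ) • e = g 0 := tendsto_const_nhds_iff.mp l2
    have : (1:ℝ) • e = (-1:ℝ) • e := e1.trans e2.symm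
    rw [one_smul, neg_smul, one_smul, eq_neg_iff_add_eq_zero, ← two_smul ℝ] at this
    have hn := congrArg norm this
    rw [norm_smul, hne] at hn
    norm_num at hn
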